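/- arXiv:2211.09624 — 11 statements merged into one kernel-verified Lean document; each statement's English description precedes it below -/
import Mathlib

section
/- Let S be an inverse semigroup. S has only finite L-classes if and only if S has only finite R-classes, if and only if S has only finite D-classes. -/
/-- An inverse semigroup has only finite L-classes iff it has only finite
R-classes, iff it has only finite D-classes. -/
theorem stmt_3 {S : Type*} [Semigroup S] (star : S → S)
    (hinv : ∀ s : S, s * star s * s = s)
    (hinv2 : ∀ s : S, star s * s * star s = star s)
    (hcomm : ∀ e f : S, e * e = e → f * f = f → e * f = f * e) :
    ((∀ s : S, {x : S | star x * x = star s * s}.Finite) ↔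
      (∀ s : S, {x : S | x * star x = s * star s}.Finite)) ∧
    ((∀ s : S, {x : S | star x * x = star s * s}.Finite) ↔
      (∀ s : S, {x : S | ∃ u : S, star x * x = star u * u ∧
        u * star u = s * star s}.Finite)) := by
  -- uniqueness of inverses
  have uniq : ∀ s t t' : S, s*t*s = s → t*s*t = t → s*t'*s = s → t'*s*t' = t' →
      t = t' := by
    intro s t t' h1 h2 h3 h4
    have e1 : (t*s)*(t*s) = t*s := by rw [mul_assoc, ← mul_assoc s t s, h1]
    have e2 : (t'*s)*(t'*s) = t'*s := by rw [mul_assoc, ← mul_assoc s t' s, h3]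
    have e3 : (s*t)*(s*t) = s*t := by rw [mul_assoc, ← mul_assoc t s t, h2]
    have e4 : (s*t')*(s*t') = s*t' := by rw [mul_assoc, ← mul_assoc t' s t', h4]
    have c12 := hcomm _ _ e1 e2
    have c34 := hcomm _ _ e3 e4
    have k1 : t = t' * s * t := by
      calc t = t*s*t := h2.symm
        _ = t*(s*t'*s)*t := by rw [h3]
        _ = (t*s)*(t'*s)*t := by simp only [mul_assoc]
        _ = (t'*s)*(t*s)*t := by rw [c12]
        _ = t'*s*(t*s*t) := by simp only [mul_assoc]
        _ = t'*s*t := by rw [h2]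
    have k2 : t' = t' * s * t := by
      calc t' = t'*s*t' := h4.symm
        _ = t'*(s*t*s)*t' := by rw [h1]
        _ = t'*((s*t)*(s*t')) := by simp only [mul_assoc]
        _ = t'*((s*t')*(s*t)) := by rw [c34]
        _ = (t'*s*t')*(s*t) := by simp only [mul_assoc]
        _ = t'*(s*t) := by rw [h4]
        _ = t'*s*t := by rw [mul_assoc]
    exact k1.trans k2.symm
  have hss : ∀ s : S, star (star s) = s := fun s =>
    uniq (star s) (star (star s)) s (hinv (star s)) (hinv2 (star s))
      (hinv2 s) (hinv s)
  have hinj : Function.Injective star := fun a b h => by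
    rw [← hss a, h, hss]
  -- First iff: L-finite ↔ R-finite
  have fiff : (∀ s : S, {x : S | star x * x = star s * s}.Finite) ↔
      (∀ s : S, {x : S | x * star x = s * star s}.Finite) := by
    constructor
    · intro h s
      have heq : {x : S | x * star x = s * star s}
          = star ⁻¹' {y : S | star y * y = star (star s) * star s} := by
        ext x
        simp only [Set.mem_setOf_eq, Set.mem_preimage, hss]
      rw [heq]
      exact (h (star s)).preimage hinj.injOn
    · intro h s
      have heq : {x : S | star x * x = star s * s}
          = star ⁻¹' {y : S | y * star y = star s * star (star s)} := by
        ext x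
        simp only [Set.mem_setOf_eq, Set.mem_preimage, hss]
      rw [heq]
      exact (h (star s)).preimage hinj.injOn
  refine ⟨fiff, ?_⟩
  constructor
  · intro hL s
    have hR := fiff.mp hL
    have heq : {x : S | ∃ u : S, star x * x = star u * u ∧
        u * star u = s * star s}
        = ⋃ u ∈ {u : S | u * star u = s * star s},
            {x : S | star x * x = star u * u} := by
      ext x
      simp only [Set.mem_setOf_eq, Set.mem_iUnion, exists_prop]
      tauto
    rw [heq]
    exact (hR s).biUnion fun u _ => hL u
  · intro hD s
    exact (hD s).subset fun x hx => ⟨s, hx, rfl⟩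
end

section
/- Let S be an inverse semigroup with a right subinvariant extended metric d whose finite-distance components are exactly the L-classes. Then for every s ∈ S, the map L_s → L_{s*} given by t ↦ ts* is an isometry (where L_s denotes the L-class of s). -/
open scoped ENNReal

/-- For a right subinvariant extended metric whose components are the L-classes,
the map `t ↦ t s*` is an isometry from the L-class of `s` onto (into) the
L-class of `s*`. -/
theorem stmt_4 {S : Type*} [Semigroup S] (star : S → S)
    (hinv : ∀ s : S, s * star s * s = s)
    (hinv2 : ∀ s : S, star s * s * star s = star s)
    (hcomm : ∀ e f : S, e * e = e → f * f = f → e * f = f * e)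
    (d : S → S → ℝ≥0∞)
    (hrefl : ∀ x y : S, d x y = 0 ↔ x = y)
    (hsymm : ∀ x y : S, d x y = d y x)
    (htri : ∀ x y z : S, d x z ≤ d x y + d y z)
    (hcomp : ∀ x y : S, d x y ≠ ⊤ ↔ star x * x = star y * y)
    (hsub : ∀ s t x : S, d (s * x) (t * x) ≤ d s t)
    (s : S) :
    (∀ t : S, star t * t = star s * s →
      star (t * star s) * (t * star s) = star (star s) * star s) ∧
    (∀ t₁ t₂ : S, star t₁ * t₁ = star s * s → star t₂ * t₂ = star s * s →
      d (t₁ * star s) (t₂ * star s) = d t₁ t₂) := by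
  have idem : ∀ x : S, (star x * x) * (star x * x) = star x * x := by
    intro x
    calc (star x * x) * (star x * x) = star x * (x * star x * x) := by simp [mul_assoc]
    _ = star x * x := by rw [hinv]
  -- uniqueness of inverses
  have uniq : ∀ x y : S, x * y * x = x → y * x * y = y → y = star x := by
    intro x y h1 h2
    set z := star x with hz
    have hxzx : x * z * x = x := hinv x
    have hzxz : z * x * z = z := hinv2 x
    have ixy : (x * y) * (x * y) = x * y := by
      calc (x * y) * (x * y) = x * (y * x * y) := by simp [mul_assoc]
      _ = x * y := by rw [h2]
    have ixz : (x * z) * (x * z) = x * z := by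
      calc (x * z) * (x * z) = x * (z * x * z) := by simp [mul_assoc]
      _ = x * z := by rw [hzxz]
    have iyx : (y * x) * (y * x) = y * x := by
      calc (y * x) * (y * x) = (y * x * y) * x := by simp [mul_assoc]
      _ = y * x := by rw [h2]
    have izx : (z * x) * (z * x) = z * x := by
      calc (z * x) * (z * x) = (z * x * z) * x := by simp [mul_assoc]
      _ = z * x := by rw [hzxz]
    have hy : y = z * x * y := by
      calc y = y * x * y := h2.symm
      _ = y * (x * z * x) * y := by rw [hxzx]
      _ = (y * x) * (z * x) * y := by simp [mul_assoc]
      _ = (z * x) * (y * x) * y := by rw [hcomm _ _ iyx izx]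
      _ = z * (x * (y * x * y)) := by simp [mul_assoc]
      _ = z * (x * y) := by rw [h2]
      _ = z * x * y := by rw [mul_assoc]
    have hzeq : z = z * x * y := by
      calc z = z * x * z := hzxz.symm
      _ = z * (x * y * x) * z := by rw [h1]
      _ = z * ((x * y) * (x * z)) := by simp [mul_assoc]
      _ = z * ((x * z) * (x * y)) := by rw [hcomm _ _ ixy ixz]
      _ = (z * x * z) * (x * y) := by simp [mul_assoc]
      _ = z * (x * y) := by rw [hzxz]
      _ = z * x * y := by rw [mul_assoc]
    rw [hy, ← hzeq]
  have hstarstar : star (star s) = s :=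
    (uniq (star s) s (hinv2 s) (hinv s)).symm
  have hstarmap : ∀ t : S, star t * t = star s * s → star (t * star s) = s * star t := by
    intro t ht
    refine (uniq (t * star s) (s * star t) ?_ ?_).symm
    · calc (t * star s) * (s * star t) * (t * star s)
          = t * ((star s * s) * (star t * t)) * star s := by simp [mul_assoc]
      _ = t * ((star s * s) * (star s * s)) * star s := by rw [ht]
      _ = t * (star s * s) * star s := by rw [idem]
      _ = t * (star s * s * star s) := by simp [mul_assoc]
      _ = t * star s := by rw [hinv2]
    · calc (s * star t) * (t * star s) * (s * star t)
          = s * ((star t * t) * (star s * s)) * star t := by simp [mul_assoc]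
      _ = s * ((star s * s) * (star s * s)) * star t := by rw [ht]
      _ = s * (star s * s) * star t := by rw [idem]
      _ = (s * star s * s) * star t := by simp [mul_assoc]
      _ = s * star t := by rw [hinv]
  have hfix : ∀ t : S, star t * t = star s * s → t * star s * s = t := by
    intro t ht
    calc t * star s * s = t * (star s * s) := by rw [mul_assoc]
    _ = t * (star t * t) := by rw [ht]
    _ = t * star t * t := by rw [mul_assoc]
    _ = t := hinv t
  constructor
  · intro t ht
    rw [hstarmap t ht, hstarstar]
    calc (s * star t) * (t * star s)
        = s * ((star t * t) * star s) := by simp [mul_assoc]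
      _ = s * ((star s * s) * star s) := by rw [ht]
      _ = s * (star s * s * star s) := by simp [mul_assoc]
      _ = s * star s := by rw [hinv2]
  · intro t₁ t₂ h1 h2
    refine le_antisymm (hsub _ _ _) ?_
    have := hsub (t₁ * star s) (t₂ * star s) s
    rwa [mul_assoc, mul_assoc, ← mul_assoc t₁, ← mul_assoc t₂, hfix t₁ h1, hfix t₂ h2] at this
end

section
/- Let S be an inverse semigroup with a right subinvariant extended metric d whose components are the L-classes. If y ≤ x in the natural partial order, then d(y*y, y) ≤ d(x*x, x). -/
open scoped ENNReal

/-- Uniqueness of inverses in a semigroup with commuting idempotents. -/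
lemma inv_unique_aux {S : Type*} [Semigroup S]
    (hcomm : ∀ e f : S, e * e = e → f * f = f → e * f = f * e)
    (y a b : S) (hya : y * a * y = y) (hay : a * y * a = a)
    (hyb : y * b * y = y) (hby : b * y * b = b) : a = b := by
  have hayi : (a * y) * (a * y) = a * y := by
    calc (a * y) * (a * y) = (a * y * a) * y := by simp [mul_assoc]
    _ = a * y := by rw [hay]
  have hbyi : (b * y) * (b * y) = b * y := by
    calc (b * y) * (b * y) = (b * y * b) * y := by simp [mul_assoc]
    _ = b * y := by rw [hby]
  have hyai : (y * a) * (y * a) = y * a := by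
    calc (y * a) * (y * a) = (y * a * y) * a := by simp [mul_assoc]
    _ = y * a := by rw [hya]
  have hybi : (y * b) * (y * b) = y * b := by
    calc (y * b) * (y * b) = (y * b * y) * b := by simp [mul_assoc]
    _ = y * b := by rw [hyb]
  have h1 : a = b * y * a := by
    calc a = a * y * a := hay.symm
    _ = a * (y * b * y) * a := by rw [hyb]
    _ = (a * y) * (b * y) * a := by simp [mul_assoc]
    _ = (b * y) * (a * y) * a := by rw [hcomm _ _ hayi hbyi]
    _ = b * (y * a * y) * a := by simp [mul_assoc]
    _ = b * y * a := by rw [hya]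
  have h2 : b = a * y * b := by
    calc b = b * y * b := hby.symm
    _ = b * (y * a * y) * b := by rw [hya]
    _ = (b * y) * (a * y) * b := by simp [mul_assoc]
    _ = (a * y) * (b * y) * b := by rw [hcomm _ _ hayi hbyi]
    _ = a * (y * b * y) * b := by simp [mul_assoc]
    _ = a * y * b := by rw [hyb]
  calc a = b * y * a := h1
  _ = (b * y * b) * y * a := by rw [hby]
  _ = b * ((y * b) * (y * a)) := by simp [mul_assoc]
  _ = b * ((y * a) * (y * b)) := by rw [hcomm _ _ hybi hyai]
  _ = (b * y * a) * (y * b) := by simp [mul_assoc]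
  _ = a * y * b := by rw [← h1]; simp [mul_assoc]
  _ = b := h2.symm

/-- If `y ≤ x` in the natural partial order then `d(y*y, y) ≤ d(x*x, x)`. -/
theorem stmt_6 {S : Type*} [Semigroup S] (star : S → S)
    (hinv : ∀ s : S, s * star s * s = s)
    (hinv2 : ∀ s : S, star s * s * star s = star s)
    (hcomm : ∀ e f : S, e * e = e → f * f = f → e * f = f * e)
    (d : S → S → ℝ≥0∞)
    (hrefl : ∀ x y : S, d x y = 0 ↔ x = y)
    (hsymm : ∀ x y : S, d x y = d y x)
    (htri : ∀ x y z : S, d x z ≤ d x y + d y z)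
    (hcomp : ∀ x y : S, d x y ≠ ⊤ ↔ star x * x = star y * y)
    (hsub : ∀ s t x : S, d (s * x) (t * x) ≤ d s t)
    (x y : S) (h : y = x * (star y * y)) :
    d (star y * y) y ≤ d (star x * x) x := by
  set e := star y * y with he
  set f := star x * x with hf
  have hee : e * e = e := by
    calc e * e = star y * (y * star y * y) := by simp [he, mul_assoc]
    _ = e := by rw [hinv]
  have hff : f * f = f := by
    calc f * f = star x * (x * star x * x) := by simp [hf, mul_assoc]
    _ = f := by rw [hinv]
  have hef : e * f = f * e := hcomm _ _ hee hff
  -- b := e * star x is an inverse of y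
  set b := e * star x with hb
  have hyby : y * b * y = y := by
    calc y * b * y = (x * e) * (e * star x) * (x * e) := by rw [← h, ← hb]
    _ = x * ((e * e) * (star x * x)) * e := by simp [mul_assoc]
    _ = x * (e * f) * e := by rw [hee, hf]
    _ = x * (f * e) * e := by rw [hef]
    _ = (x * star x * x) * (e * e) := by simp [hf, mul_assoc]
    _ = x * e := by rw [hinv, hee]
    _ = y := h.symm
  have hbyb : b * y * b = b := by
    calc b * y * b = (e * star x) * (x * e) * (e * star x) := by rw [← h, ← hb]
    _ = e * ((star x * x) * (e * e)) * star x := by simp [mul_assoc]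
    _ = e * (f * e) * star x := by rw [hee, hf]
    _ = e * (e * f) * star x := by rw [hef]
    _ = (e * e) * (star x * x * star x) := by simp [hf, mul_assoc]
    _ = e * star x := by rw [hee, hinv2]
    _ = b := hb.symm
  have hstar : star y = b :=
    inv_unique_aux hcomm y (star y) b (hinv y) (hinv2 y) hyby hbyb
  have hbye : b * y = e * f := by
    calc b * y = (e * star x) * (x * e) := by rw [hb, ← h]
    _ = e * (f * e) := by simp [hf, mul_assoc]
    _ = e * (e * f) := by rw [hef]
    _ = (e * e) * f := by simp [mul_assoc]
    _ = e * f := by rw [hee]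
  have hfe : f * e = e := by
    rw [← hef, ← hbye, ← hstar, ← he]
  calc d e y = d (f * e) (x * e) := by rw [hfe, ← h]
  _ ≤ d f x := hsub f x e
end

section
/- Let S be an inverse semigroup with a right subinvariant extended metric d whose components are the L-classes. Then any two L-classes contained in the same D-class are isometric. -/
open scoped ENNReal

/-- Any two L-classes in the same D-class are isometric. -/
theorem stmt_7 {S : Type*} [Semigroup S] (star : S → S)
    (hinv : ∀ s : S, s * star s * s = s)
    (hinv2 : ∀ s : S, star s * s * star s = star s)
    (hcomm : ∀ e f : S, e * e = e → f * f = f → e * f = f * e)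
    (d : S → S → ℝ≥0∞)
    (hrefl : ∀ x y : S, d x y = 0 ↔ x = y)
    (hsymm : ∀ x y : S, d x y = d y x)
    (htri : ∀ x y z : S, d x z ≤ d x y + d y z)
    (hcomp : ∀ x y : S, d x y ≠ ⊤ ↔ star x * x = star y * y)
    (hsub : ∀ s t x : S, d (s * x) (t * x) ≤ d s t)
    (s t : S) (h : ∃ u : S, star s * s = star u * u ∧ u * star u = t * star t) :
    ∃ f : S → S,
      Set.BijOn f {x : S | star x * x = star s * s} {x : S | star x * x = star t * t} ∧
      ∀ a ∈ {x : S | star x * x = star s * s}, ∀ b ∈ {x : S | star x * x = star s * s},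
        d (f a) (f b) = d a b := by
  obtain ⟨u, h1, h2⟩ := h
  -- useful rewrites
  have hut : u * star u * t = t := by rw [h2]; exact hinv t
  have htu : t * star t * u = u := by rw [← h2]; exact hinv u
  -- g ∘ f = id on the L-class of s
  have key1 : ∀ x : S, star x * x = star s * s → x * star u * t * star t * u = x := by
    intro x hx
    calc x * star u * t * star t * u
        = x * star u * (t * star t * u) := by
          rw [mul_assoc (x * star u) t (star t), mul_assoc (x * star u) (t * star t) u]
      _ = x * star u * u := by rw [htu]
      _ = x * (star x * x) := by rw [mul_assoc, ← h1, ← hx]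
      _ = x := by rw [← mul_assoc]; exact hinv x
  -- f ∘ g = id on the L-class of t
  have key2 : ∀ y : S, star y * y = star t * t → y * star t * u * star u * t = y := by
    intro y hy
    calc y * star t * u * star u * t
        = y * star t * (u * star u * t) := by
          rw [mul_assoc (y * star t) u (star u), mul_assoc (y * star t) (u * star u) t]
      _ = y * star t * t := by rw [hut]
      _ = y * (star y * y) := by rw [mul_assoc, ← hy]
      _ = y := by rw [← mul_assoc]; exact hinv y
  -- f maps the L-class of s into the L-class of t
  have hf : ∀ x : S, star x * x = star s * s → star (x * star u * t) * (x * star u * t) = star t * t := by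
    intro x hx
    have hxu : d x u ≠ ⊤ := (hcomp x u).mpr (hx.trans h1)
    have hle : d (x * star u * t) t ≤ d x u := by
      calc d (x * star u * t) t = d (x * star u * t) (u * star u * t) := by rw [hut]
        _ ≤ d (x * star u) (u * star u) := hsub _ _ t
        _ ≤ d x u := hsub x u (star u)
    exact (hcomp _ t).mp (fun hT => hxu (top_le_iff.mp (hT ▸ hle)))
  -- g maps the L-class of t into the L-class of s
  have hg : ∀ y : S, star y * y = star t * t → star (y * star t * u) * (y * star t * u) = star s * s := by
    intro y hy
    have hyt : d y t ≠ ⊤ := (hcomp y t).mpr hy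
    have hle : d (y * star t * u) u ≤ d y t := by
      calc d (y * star t * u) u = d (y * star t * u) (t * star t * u) := by rw [htu]
        _ ≤ d (y * star t) (t * star t) := hsub _ _ u
        _ ≤ d y t := hsub y t (star t)
    have := (hcomp _ u).mp (fun hT => hyt (top_le_iff.mp (hT ▸ hle)))
    exact this.trans h1.symm
  refine ⟨fun x => x * star u * t, ⟨?_, ?_, ?_⟩, ?_⟩
  · intro x hx; exact hf x hx
  · intro a ha b hb hab
    have hab' : a * star u * t = b * star u * t := hab
    have : a * star u * t * star t * u = b * star u * t * star t * u := by rw [hab']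
    rwa [key1 a ha, key1 b hb] at this
  · intro y hy
    exact ⟨y * star t * u, hg y hy, key2 y hy⟩
  · intro a ha b hb
    refine le_antisymm (le_trans (hsub _ _ t) (hsub a b (star u))) ?_
    calc d a b = d (a * star u * t * star t * u) (b * star u * t * star t * u) := by
          rw [key1 a ha, key1 b hb]
      _ ≤ d (a * star u * t * star t) (b * star u * t * star t) := hsub _ _ u
      _ ≤ d (a * star u * t) (b * star u * t) := hsub _ _ (star t)
end

section
/- Let S be an inverse semigroup with a right subinvariant extended metric d whose components are the L-classes. Then l(s) := d(s*s, s) defines a length function on S, i.e.: l(s) = 0 iff s is idempotent; l(s) = l(s*); and l(st) ≤ l(s) + l(t) for all s,t ∈ S. -/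
open scoped ENNReal

/-- `l(s) := d(s*s, s)` is a (finite-valued) length function: it vanishes exactly
on idempotents, is invariant under `*`, and is subadditive. -/
theorem stmt_8 {S : Type*} [Semigroup S] (star : S → S)
    (hinv : ∀ s : S, s * star s * s = s)
    (hinv2 : ∀ s : S, star s * s * star s = star s)
    (hcomm : ∀ e f : S, e * e = e → f * f = f → e * f = f * e)
    (d : S → S → ℝ≥0∞)
    (hrefl : ∀ x y : S, d x y = 0 ↔ x = y)
    (hsymm : ∀ x y : S, d x y = d y x)
    (htri : ∀ x y z : S, d x z ≤ d x y + d y z)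
    (hcomp : ∀ x y : S, d x y ≠ ⊤ ↔ star x * x = star y * y)
    (hsub : ∀ s t x : S, d (s * x) (t * x) ≤ d s t) :
    (∀ s : S, d (star s * s) s ≠ ⊤) ∧
    (∀ s : S, d (star s * s) s = 0 ↔ s * s = s) ∧
    (∀ s : S, d (star s * s) s = d (star (star s) * star s) (star s)) ∧
    (∀ s t : S, d (star (s * t) * (s * t)) (s * t) ≤
      d (star s * s) s + d (star t * t) t) := by
  -- idempotency of s* s and s s*
  have hid1 : ∀ s : S, (star s * s) * (star s * s) = star s * s := by
    intro s
    calc (star s * s) * (star s * s) = star s * (s * star s * s) := by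
          simp [mul_assoc]
      _ = star s * s := by rw [hinv s]
  have hid2 : ∀ s : S, (s * star s) * (s * star s) = s * star s := by
    intro s
    calc (s * star s) * (s * star s) = (s * star s * s) * star s := by
          simp [mul_assoc]
      _ = s * star s := by rw [hinv s]
  -- uniqueness of inverses
  have huniq : ∀ x a b : S, x * a * x = x → a * x * a = a →
      x * b * x = x → b * x * b = b → a = b := by
    intro x a b hxa hax hxb hbx
    have hax_id : (a * x) * (a * x) = a * x := by
      calc (a * x) * (a * x) = (a * x * a) * x := by simp [mul_assoc]
        _ = a * x := by rw [hax]
    have hbx_id : (b * x) * (b * x) = b * x := by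
      calc (b * x) * (b * x) = (b * x * b) * x := by simp [mul_assoc]
        _ = b * x := by rw [hbx]
    have hxa_id : (x * a) * (x * a) = x * a := by
      calc (x * a) * (x * a) = (x * a * x) * a := by simp [mul_assoc]
        _ = x * a := by rw [hxa]
    have hxb_id : (x * b) * (x * b) = x * b := by
      calc (x * b) * (x * b) = (x * b * x) * b := by simp [mul_assoc]
        _ = x * b := by rw [hxb]
    have ha : a = b * x * a := by
      calc a = a * x * a := hax.symm
        _ = a * (x * b * x) * a := by rw [hxb]
        _ = (a * x) * ((b * x) * a) := by simp [mul_assoc]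
        _ = ((a * x) * (b * x)) * a := by simp [mul_assoc]
        _ = ((b * x) * (a * x)) * a := by rw [hcomm _ _ hax_id hbx_id]
        _ = b * (x * a * x) * a := by simp [mul_assoc]
        _ = b * x * a := by rw [hxa]
    have hb : b = b * x * a := by
      calc b = b * x * b := hbx.symm
        _ = b * (x * a * x) * b := by rw [hxa]
        _ = b * ((x * a) * (x * b)) := by simp [mul_assoc]
        _ = b * ((x * b) * (x * a)) := by rw [hcomm _ _ hxa_id hxb_id]
        _ = (b * x * b) * (x * a) := by simp [mul_assoc]
        _ = b * x * a := by rw [hbx]; simp [mul_assoc]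
    rw [ha, ← hb]
  -- star of an idempotent is itself
  have hstar_id : ∀ e : S, e * e = e → star e = e := by
    intro e he
    refine huniq e (star e) e (hinv e) (hinv2 e) ?_ ?_ <;> rw [he, he]
  -- star star s = s
  have hss : ∀ s : S, star (star s) = s := fun s =>
    huniq (star s) (star (star s)) s (hinv (star s)) (hinv2 (star s))
      (hinv2 s) (hinv s)
  -- star (s t) = star t * star s
  have hstm : ∀ s t : S, star (s * t) = star t * star s := by
    intro s t
    refine huniq (s * t) (star (s * t)) (star t * star s)
      (hinv (s * t)) (hinv2 (s * t)) ?_ ?_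
    · calc (s * t) * (star t * star s) * (s * t)
          = s * ((t * star t) * (star s * s)) * t := by simp [mul_assoc]
        _ = s * ((star s * s) * (t * star t)) * t := by
            rw [hcomm _ _ (hid2 t) (hid1 s)]
        _ = (s * star s * s) * (t * star t * t) := by simp [mul_assoc]
        _ = s * t := by rw [hinv s, hinv t]
    · calc (star t * star s) * (s * t) * (star t * star s)
          = star t * ((star s * s) * (t * star t)) * star s := by simp [mul_assoc]
        _ = star t * ((t * star t) * (star s * s)) * star s := by
            rw [hcomm _ _ (hid1 s) (hid2 t)]
        _ = (star t * t * star t) * (star s * s * star s) := by simp [mul_assoc]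
        _ = star t * star s := by rw [hinv2 s, hinv2 t]
  -- part 3 : l(s) = l(s*)
  have hpart3 : ∀ s : S, d (star s * s) s = d (s * star s) (star s) := by
    have hle : ∀ s : S, d (s * star s) (star s) ≤ d (star s * s) s := by
      intro s
      calc d (s * star s) (star s) = d (star s) (s * star s) := hsymm _ _
        _ = d ((star s * s) * star s) (s * star s) := by rw [hinv2 s]
        _ ≤ d (star s * s) s := hsub _ _ _
    intro s
    refine le_antisymm ?_ (hle s)
    calc d (star s * s) s = d (star s * s) ((s * star s) * s) := by rw [hinv s]
      _ ≤ d (star s) (s * star s) := hsub _ _ _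
      _ = d (s * star s) (star s) := hsymm _ _
  refine ⟨?_, ?_, ?_, ?_⟩
  · -- finiteness
    intro s
    rw [hcomp]
    rw [hstar_id _ (hid1 s), hid1 s]
  · -- vanishing iff idempotent
    intro s
    rw [hrefl]
    constructor
    · intro h
      calc s * s = s * s := rfl
        _ = s := by rw [← h, hid1 s]
    · intro h
      rw [hstar_id s h, h]
  · -- invariance under star
    intro s
    rw [hss s]
    exact hpart3 s
  · -- subadditivity
    intro s t
    have key : d (star (s * t) * (s * t)) (s * t)
        = d ((s * t) * (star t * star s)) (star t * star s) := by
      rw [hpart3 (s * t), hstm s t]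
    rw [key]
    -- middle point : (t * star t) * star s
    have habs : s * (t * star t * star s) = (s * t) * (star t * star s) := by
      simp [mul_assoc]
    have hy : (star s * s) * (t * star t * star s) = t * star t * star s := by
      calc (star s * s) * (t * star t * star s)
          = ((star s * s) * (t * star t)) * star s := by simp [mul_assoc]
        _ = ((t * star t) * (star s * s)) * star s := by
            rw [hcomm _ _ (hid1 s) (hid2 t)]
        _ = (t * star t) * (star s * s * star s) := by simp [mul_assoc]
        _ = t * star t * star s := by rw [hinv2 s]
    calc d ((s * t) * (star t * star s)) (star t * star s)
        ≤ d ((s * t) * (star t * star s)) ((t * star t) * star s)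
          + d ((t * star t) * star s) (star t * star s) := htri _ _ _
      _ ≤ d (star s * s) s + d (star t * t) t := by
          gcongr
          · calc d ((s * t) * (star t * star s)) ((t * star t) * star s)
                = d (s * (t * star t * star s))
                    ((star s * s) * (t * star t * star s)) := by
                  rw [habs, hy]
              _ ≤ d s (star s * s) := hsub _ _ _
              _ = d (star s * s) s := hsymm _ _
          · calc d ((t * star t) * star s) (star t * star s)
                ≤ d (t * star t) (star t) := hsub _ _ _
              _ = d (star t * t) t := (hpart3 t).symm
end

section
/- Let S be an inverse semigroup and l : S → [0,∞) a length function. Define d(s,t) := l(ts*) if s*s = t*t, and d(s,t) := ∞ otherwise. Then d is an extended metric on S that is right subinvariant: d(sx, tx) ≤ d(s,t) for all s,t,x ∈ S. -/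
open scoped ENNReal NNReal

section Aux
variable {S : Type*} [Semigroup S] (st : S → S)
variable (hinv : ∀ s : S, s * st s * s = s)
variable (hinv2 : ∀ s : S, st s * s * st s = st s)
variable (hcomm : ∀ e f : S, e * e = e → f * f = f → e * f = f * e)

include hinv in
lemma aux_idem_right (s : S) : (s * st s) * (s * st s) = s * st s := by
  calc (s * st s) * (s * st s) = (s * st s * s) * st s := by simp only [mul_assoc]
  _ = s * st s := by rw [hinv]

include hinv2 in
lemma aux_idem_left (s : S) : (st s * s) * (st s * s) = st s * s := by
  calc (st s * s) * (st s * s) = (st s * s * st s) * s := by simp only [mul_assoc]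
  _ = st s * s := by rw [hinv2]

-- key grouping lemma: if x, y are both inverses of a, then x = y*a*x
include hcomm in
lemma aux_keyL (a x y : S) (hax : a * x * a = a) (hxa : x * a * x = x)
    (hay : a * y * a = a) (hya : y * a * y = y) : x = y * a * x := by
  have hixa : (x * a) * (x * a) = x * a := by
    calc (x * a) * (x * a) = (x * a * x) * a := by simp only [mul_assoc]
    _ = x * a := by rw [hxa]
  have hiya : (y * a) * (y * a) = y * a := by
    calc (y * a) * (y * a) = (y * a * y) * a := by simp only [mul_assoc]
    _ = y * a := by rw [hya]
  have hx' : x * (a * x) = x := by rw [← mul_assoc]; exact hxa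
  calc x = x * a * x := hxa.symm
    _ = x * (a * y * a) * x := by rw [hay]
    _ = (x * a) * ((y * a) * x) := by simp only [mul_assoc]
    _ = ((y * a) * (x * a)) * x := by
        rw [← mul_assoc, hcomm (x*a) (y*a) hixa hiya]
    _ = y * a * x := by
        simp only [mul_assoc]
        rw [show x * (a * x) = x from hx']

-- if x, y are both inverses of a, then x = x*a*y
include hcomm in
lemma aux_keyR (a x y : S) (hax : a * x * a = a) (hxa : x * a * x = x)
    (hay : a * y * a = a) (hya : y * a * y = y) : x = x * a * y := by
  have hiax : (a * x) * (a * x) = a * x := by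
    calc (a * x) * (a * x) = (a * x * a) * x := by simp only [mul_assoc]
    _ = a * x := by rw [hax]
  have hiay : (a * y) * (a * y) = a * y := by
    calc (a * y) * (a * y) = (a * y * a) * y := by simp only [mul_assoc]
    _ = a * y := by rw [hay]
  calc x = x * a * x := hxa.symm
    _ = x * (a * y * a) * x := by rw [hay]
    _ = x * ((a * y) * (a * x)) := by simp only [mul_assoc]
    _ = x * ((a * x) * (a * y)) := by rw [hcomm (a*y) (a*x) hiay hiax]
    _ = (x * a * x) * (a * y) := by simp only [mul_assoc]
    _ = x * a * y := by rw [hxa, mul_assoc]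

include hcomm in
lemma aux_uniq (a x y : S) (hax : a * x * a = a) (hxa : x * a * x = x)
    (hay : a * y * a = a) (hya : y * a * y = y) : x = y := by
  have h1 : x = x * a * y := aux_keyR hcomm a x y hax hxa hay hya
  have h2 : y = x * a * y := aux_keyL hcomm a y x hay hya hax hxa
  rw [h1, ← h2]

include hinv hinv2 hcomm in
lemma aux_star_star (s : S) : st (st s) = s :=
  aux_uniq hcomm (st s) (st (st s)) s (hinv (st s)) (hinv2 (st s)) (hinv2 s) (hinv s)

include hinv hinv2 hcomm in
lemma aux_star_idem (e : S) (he : e * e = e) : st e = e := by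
  refine aux_uniq hcomm e (st e) e (hinv e) (hinv2 e) ?_ ?_ <;>
    rw [he, he]

include hinv hinv2 hcomm in
lemma aux_star_mul (s t : S) : st (s * t) = st t * st s := by
  refine aux_uniq hcomm (s * t) (st (s*t)) (st t * st s) (hinv _) (hinv2 _) ?_ ?_
  · -- (s*t) * (st t * st s) * (s*t) = s*t
    have h1 : (t * st t) * (st s * s) = (st s * s) * (t * st t) :=
      hcomm _ _ (aux_idem_right st hinv t) (aux_idem_left st hinv2 s)
    calc (s*t) * (st t * st s) * (s*t)
        = s * ((t * st t) * (st s * s)) * t := by simp only [mul_assoc]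
      _ = s * ((st s * s) * (t * st t)) * t := by rw [h1]
      _ = (s * st s * s) * (t * st t * t) := by simp only [mul_assoc]
      _ = s * t := by rw [hinv, hinv]
  · have h1 : (st s * s) * (t * st t) = (t * st t) * (st s * s) :=
      hcomm _ _ (aux_idem_left st hinv2 s) (aux_idem_right st hinv t)
    calc (st t * st s) * (s*t) * (st t * st s)
        = st t * ((st s * s) * (t * st t)) * st s := by simp only [mul_assoc]
      _ = st t * ((t * st t) * (st s * s)) * st s := by rw [h1]
      _ = (st t * t * st t) * (st s * s * st s) := by simp only [mul_assoc]
      _ = st t * st s := by rw [hinv2, hinv2]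

end Aux

/-- From a length function `l`, `d(s,t) := l(t s*)` if `s*s = t*t` (and `∞`
otherwise) defines a right subinvariant extended metric. -/
theorem stmt_9 {S : Type*} [Semigroup S] (star : S → S)
    (hinv : ∀ s : S, s * star s * s = s)
    (hinv2 : ∀ s : S, star s * s * star s = star s)
    (hcomm : ∀ e f : S, e * e = e → f * f = f → e * f = f * e)
    (l : S → ℝ≥0)
    (hl0 : ∀ s : S, l s = 0 ↔ s * s = s)
    (hlstar : ∀ s : S, l (star s) = l s)
    (hlsub : ∀ s t : S, l (s * t) ≤ l s + l t)
    (d : S → S → ℝ≥0∞)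
    (hd : ∀ s t : S, (star s * s = star t * t → d s t = (l (t * star s) : ℝ≥0∞)) ∧
      (star s * s ≠ star t * t → d s t = ⊤)) :
    (∀ s t : S, d s t = 0 ↔ s = t) ∧
    (∀ s t : S, d s t = d t s) ∧
    (∀ s t u : S, d s u ≤ d s t + d t u) ∧
    (∀ s t x : S, d (s * x) (t * x) ≤ d s t) := by
  have sstar_mul : ∀ s t : S, star (s*t) = star t * star s :=
    aux_star_mul star hinv hinv2 hcomm
  have sstar_star : ∀ s : S, star (star s) = s := aux_star_star star hinv hinv2 hcomm
  have sidem : ∀ e : S, e*e = e → star e = e := aux_star_idem star hinv hinv2 hcomm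
  have hIR : ∀ s : S, (s * star s) * (s * star s) = s * star s := aux_idem_right star hinv
  have hIL : ∀ s : S, (star s * s) * (star s * s) = star s * s := aux_idem_left star hinv2
  refine ⟨?_, ?_, ?_, ?_⟩
  · intro s t
    constructor
    · intro h0
      by_cases h : star s * s = star t * t
      · rw [(hd s t).1 h] at h0
        have hl : l (t * star s) = 0 := by exact_mod_cast h0
        have he : (t * star s) * (t * star s) = t * star s := (hl0 _).1 hl
        have he2 : s * star t = t * star s := by
          rw [← sidem _ he, sstar_mul, sstar_star]
        have ht : (t * star s) * s = t := by
          calc (t * star s) * s = t * (star s * s) := by rw [mul_assoc]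
            _ = t * (star t * t) := by rw [h]
            _ = t := by rw [← mul_assoc, hinv]
        have hs : (t * star s) * t = s := by
          calc (t * star s) * t = (s * star t) * t := by rw [he2]
            _ = s * (star t * t) := by rw [mul_assoc]
            _ = s * (star s * s) := by rw [← h]
            _ = s := by rw [← mul_assoc, hinv]
        calc s = (t*star s) * t := hs.symm
          _ = (t*star s) * ((t*star s) * s) := by rw [ht]
          _ = ((t*star s) * (t*star s)) * s := by simp only [mul_assoc]
          _ = (t*star s) * s := by rw [he]
          _ = t := ht
      · rw [(hd s t).2 h] at h0
        exact absurd h0 (by simp)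
    · rintro rfl
      rw [(hd s s).1 rfl]
      have : l (s * star s) = 0 := (hl0 _).2 (hIR s)
      simp [this]
  · intro s t
    by_cases h : star s * s = star t * t
    · rw [(hd s t).1 h, (hd t s).1 h.symm]
      have : s * star t = star (t * star s) := by rw [sstar_mul, sstar_star]
      rw [this, hlstar]
    · rw [(hd s t).2 h, (hd t s).2 (Ne.symm h)]
  · intro s t u
    by_cases h1 : star s * s = star t * t
    · by_cases h2 : star t * t = star u * u
      · rw [(hd s u).1 (h1.trans h2), (hd s t).1 h1, (hd t u).1 h2]
        have key : u * star s = (u * star t) * (t * star s) := by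
          calc u * star s = u * (star s * s * star s) := by rw [hinv2]
            _ = u * ((star t * t) * star s) := by rw [h1]
            _ = (u * star t) * (t * star s) := by simp only [mul_assoc]
        rw [key]
        calc (l ((u*star t)*(t*star s)) : ℝ≥0∞)
            ≤ (l (u*star t) : ℝ≥0∞) + l (t*star s) := by exact_mod_cast hlsub _ _
          _ = (l (t*star s) : ℝ≥0∞) + l (u*star t) := add_comm _ _
      · rw [(hd t u).2 h2]; simp
    · rw [(hd s t).2 h1]; simp
  · intro s t x
    by_cases h : star s * s = star t * t
    · have hsx : star (s*x) = star x * star s := sstar_mul s x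
      have htx : star (t*x) = star x * star t := sstar_mul t x
      have hbase : star (s*x) * (s*x) = star (t*x) * (t*x) := by
        rw [hsx, htx]
        calc (star x * star s) * (s*x) = star x * ((star s * s) * x) := by
              simp only [mul_assoc]
          _ = star x * ((star t * t) * x) := by rw [h]
          _ = (star x * star t) * (t*x) := by simp only [mul_assoc]
      rw [(hd (s*x) (t*x)).1 hbase, (hd s t).1 h]
      have hcx : (x * star x) * (star s * s) = (star s * s) * (x * star x) :=
        hcomm _ _ (hIR x) (hIL s)
      have key : (t*x) * star (s*x) = (t * star s) * ((s*x) * star (s*x)) := by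
        rw [hsx]
        calc (t*x) * (star x * star s)
            = t * ((x * star x) * star s) := by simp only [mul_assoc]
          _ = t * ((x * star x) * (star s * s * star s)) := by rw [hinv2]
          _ = t * (((x * star x) * (star s * s)) * star s) := by simp only [mul_assoc]
          _ = t * (((star s * s) * (x * star x)) * star s) := by rw [hcx]
          _ = (t * star s) * ((s*x) * (star x * star s)) := by simp only [mul_assoc]
      rw [key]
      have h0 : l ((s*x) * star (s*x)) = 0 := (hl0 _).2 (hIR (s*x))
      calc (l ((t*star s) * ((s*x)*star (s*x))) : ℝ≥0∞)
          ≤ (l (t*star s) : ℝ≥0∞) + (l ((s*x)*star (s*x)) : ℝ≥0∞) := by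
            exact_mod_cast hlsub _ _
        _ = l (t * star s) := by rw [h0]; simp
    · rw [(hd s t).2 h]; exact le_top
end

section
/- Let S be an inverse semigroup quasi-generated by a countable set, i.e., S = ⟨F ∪ E⟩ for some countable F ⊂ S where E is the set of idempotents. Then there exists a countable inverse subsemigroup T ⊆ S such that every s ∈ S is either idempotent or of the form s = te for some t ∈ T and idempotent e; in fact one may take e = s*s. -/
section Aux

variable {S : Type*} [Semigroup S]

/-- `star s * s` is idempotent. -/
lemma aux_idem_ss (star : S → S) (hinv2 : ∀ s : S, star s * s * star s = star s)
    (s : S) : (star s * s) * (star s * s) = star s * s := by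
  calc (star s * s) * (star s * s) = (star s * s * star s) * s := by
        simp only [mul_assoc]
    _ = star s * s := by rw [hinv2]

/-- `s * star s` is idempotent. -/
lemma aux_idem_ss' (star : S → S) (hinv : ∀ s : S, s * star s * s = s)
    (s : S) : (s * star s) * (s * star s) = s * star s := by
  calc (s * star s) * (s * star s) = (s * star s * s) * star s := by
        simp only [mul_assoc]
    _ = s * star s := by rw [hinv]

/-- products of idempotents are idempotent -/
lemma aux_idem_mul (hcomm : ∀ e f : S, e * e = e → f * f = f → e * f = f * e)
    (e f : S) (he : e * e = e) (hf : f * f = f) :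
    (e * f) * (e * f) = e * f := by
  calc (e * f) * (e * f) = e * (f * e) * f := by simp only [mul_assoc]
    _ = e * (e * f) * f := by rw [hcomm e f he hf]
    _ = (e * e) * (f * f) := by simp only [mul_assoc]
    _ = e * f := by rw [he, hf]

/-- uniqueness of inverses -/
lemma aux_unique (hcomm : ∀ e f : S, e * e = e → f * f = f → e * f = f * e)
    (s x y : S) (hx1 : s * x * s = s) (hx2 : x * s * x = x)
    (hy1 : s * y * s = s) (hy2 : y * s * y = y) : x = y := by
  have hxs : (x * s) * (x * s) = x * s := by
    calc (x * s) * (x * s) = (x * s * x) * s := by simp only [mul_assoc]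
      _ = x * s := by rw [hx2]
  have hys : (y * s) * (y * s) = y * s := by
    calc (y * s) * (y * s) = (y * s * y) * s := by simp only [mul_assoc]
      _ = y * s := by rw [hy2]
  have hsx : (s * x) * (s * x) = s * x := by
    calc (s * x) * (s * x) = s * (x * s * x) := by simp only [mul_assoc]
      _ = s * x := by rw [hx2]
  have hsy : (s * y) * (s * y) = s * y := by
    calc (s * y) * (s * y) = s * (y * s * y) := by simp only [mul_assoc]
      _ = s * y := by rw [hy2]
  have h1 : x = y * s * x := by
    calc x = x * s * x := hx2.symm
      _ = x * (s * y * s) * x := by rw [hy1]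
      _ = (x * s) * (y * s) * x := by simp only [mul_assoc]
      _ = (y * s) * (x * s) * x := by rw [hcomm _ _ hxs hys]
      _ = y * s * (x * s * x) := by simp only [mul_assoc]
      _ = y * s * x := by rw [hx2]
  have h2 : y = y * s * x := by
    calc y = y * s * y := hy2.symm
      _ = y * (s * x * s) * y := by rw [hx1]
      _ = y * ((s * x) * (s * y)) := by simp only [mul_assoc]
      _ = y * ((s * y) * (s * x)) := by rw [hcomm _ _ hsx hsy]
      _ = (y * s * y) * (s * x) := by simp only [mul_assoc]
      _ = y * (s * x) := by rw [hy2]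
      _ = y * s * x := (mul_assoc _ _ _).symm
  rw [h1, ← h2]

lemma aux_star_mul_s12 (star : S → S) (hinv : ∀ s : S, s * star s * s = s)
    (hinv2 : ∀ s : S, star s * s * star s = star s)
    (hcomm : ∀ e f : S, e * e = e → f * f = f → e * f = f * e)
    (a b : S) : star (a * b) = star b * star a := by
  refine aux_unique hcomm (a * b) _ _ (hinv _) (hinv2 _) ?_ ?_
  · calc a * b * (star b * star a) * (a * b)
        = a * ((b * star b) * (star a * a)) * b := by simp only [mul_assoc]
      _ = a * ((star a * a) * (b * star b)) * b := by
          rw [hcomm _ _ (aux_idem_ss' star hinv b) (aux_idem_ss star hinv2 a)]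
      _ = (a * star a * a) * (b * star b * b) := by simp only [mul_assoc]
      _ = a * b := by rw [hinv, hinv]
  · calc star b * star a * (a * b) * (star b * star a)
        = star b * ((star a * a) * (b * star b)) * star a := by simp only [mul_assoc]
      _ = star b * ((b * star b) * (star a * a)) * star a := by
          rw [hcomm _ _ (aux_idem_ss star hinv2 a) (aux_idem_ss' star hinv b)]
      _ = (star b * b * star b) * (star a * a * star a) := by simp only [mul_assoc]
      _ = star b * star a := by rw [hinv2, hinv2]

lemma aux_star_star_s12 (star : S → S) (hinv : ∀ s : S, s * star s * s = s)
    (hinv2 : ∀ s : S, star s * s * star s = star s)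
    (hcomm : ∀ e f : S, e * e = e → f * f = f → e * f = f * e)
    (s : S) : star (star s) = s :=
  aux_unique hcomm (star s) _ _ (hinv _) (hinv2 _) (hinv2 s) (hinv s)

/-- conjugate of an idempotent is idempotent -/
lemma aux_conj_idem (star : S → S) (hinv : ∀ s : S, s * star s * s = s)
    (hinv2 : ∀ s : S, star s * s * star s = star s)
    (hcomm : ∀ e f : S, e * e = e → f * f = f → e * f = f * e)
    (t a : S) (ha : a * a = a) :
    (star t * a * t) * (star t * a * t) = star t * a * t := by
  calc (star t * a * t) * (star t * a * t)
      = star t * (a * (t * star t)) * (a * t) := by simp only [mul_assoc]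
    _ = star t * ((t * star t) * a) * (a * t) := by
        rw [hcomm _ _ ha (aux_idem_ss' star hinv t)]
    _ = (star t * t * star t) * ((a * a) * t) := by simp only [mul_assoc]
    _ = star t * (a * t) := by rw [hinv2, ha]
    _ = star t * a * t := (mul_assoc _ _ _).symm

/-- moving an idempotent past `t` -/
lemma aux_swap (star : S → S) (hinv : ∀ s : S, s * star s * s = s)
    (hcomm : ∀ e f : S, e * e = e → f * f = f → e * f = f * e)
    (t a : S) (ha : a * a = a) : t * (star t * a * t) = a * t := by
  calc t * (star t * a * t) = ((t * star t) * a) * t := by simp only [mul_assoc]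
    _ = (a * (t * star t)) * t := by rw [hcomm _ _ (aux_idem_ss' star hinv t) ha]
    _ = a * (t * star t * t) := by simp only [mul_assoc]
    _ = a * t := by rw [hinv]

end Aux

/-- If `S` is quasi-generated by a countable set, there is a countable inverse
subsemigroup `T` such that every element is idempotent or of the form `t·(s*s)`
with `t ∈ T`. -/
theorem stmt_12 {S : Type*} [Semigroup S] (star : S → S)
    (hinv : ∀ s : S, s * star s * s = s)
    (hinv2 : ∀ s : S, star s * s * star s = star s)
    (hcomm : ∀ e f : S, e * e = e → f * f = f → e * f = f * e)
    (hqc : ∃ F : Set S, F.Countable ∧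
      Subsemigroup.closure (F ∪ star '' F ∪ {e : S | e * e = e}) = ⊤) :
    ∃ T : Set S, T.Countable ∧ (∀ a ∈ T, ∀ b ∈ T, a * b ∈ T) ∧
      (∀ a ∈ T, star a ∈ T) ∧
      ∀ s : S, s * s = s ∨ ∃ t ∈ T, s = t * (star s * s) := by
  obtain ⟨F, hFc, htop⟩ := hqc
  set G : Set S := F ∪ star '' F with hG
  have hGc : G.Countable := hFc.union (hFc.image star)
  set T : Set S := (Subsemigroup.closure G : Set S) with hT
  -- countability of T
  have hTc : T.Countable := by
    haveI := hGc.to_subtype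
    have key : ∀ s ∈ Subsemigroup.closure G,
        ∃ p : G × List G, s = (p.2.map Subtype.val).foldl (· * ·) p.1.1 := by
      intro s hs
      induction hs using Subsemigroup.closure_induction with
      | mem x hx => exact ⟨⟨⟨x, hx⟩, []⟩, rfl⟩
      | mul a b _ _ iha ihb =>
        obtain ⟨⟨xa, la⟩, ha⟩ := iha
        obtain ⟨⟨xb, lb⟩, hb⟩ := ihb
        refine ⟨⟨xa, la ++ xb :: lb⟩, ?_⟩
        have foldl_mul : ∀ (l : List S) (x y : S),
            l.foldl (· * ·) (x * y) = x * l.foldl (· * ·) y := by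
          intro l
          induction l with
          | nil => intro x y; rfl
          | cons c l ih => intro x y; simp only [List.foldl_cons, mul_assoc, ih]
        simp only [List.map_append, List.map_cons, List.foldl_append, List.foldl_cons]
        rw [foldl_mul, ← ha, ← hb]
    have hsub : T ⊆ Set.range (fun p : G × List G =>
        (p.2.map Subtype.val).foldl (· * ·) p.1.1) := by
      intro s hs
      obtain ⟨p, hp⟩ := key s hs
      exact ⟨p, hp.symm⟩
    exact (Set.countable_range _).mono hsub
  have hGsub : G ⊆ T := Subsemigroup.subset_closure
  have hTmul : ∀ a ∈ T, ∀ b ∈ T, a * b ∈ T := fun a ha b hb =>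
    Subsemigroup.mul_mem _ ha hb
  have hTstar : ∀ a ∈ T, star a ∈ T := by
    intro a ha
    induction ha using Subsemigroup.closure_induction with
    | mem x hx =>
      rcases hx with hx | ⟨f, hf, rfl⟩
      · exact hGsub (Or.inr ⟨x, hx, rfl⟩)
      · rw [aux_star_star_s12 star hinv hinv2 hcomm]
        exact hGsub (Or.inl hf)
    | mul a b _ _ iha ihb =>
      rw [aux_star_mul_s12 star hinv hinv2 hcomm]
      exact Subsemigroup.mul_mem _ ihb iha
  refine ⟨T, hTc, hTmul, hTstar, ?_⟩
  intro s
  -- first: s is idempotent or s = t * e with t ∈ T, e idempotent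
  have key : s * s = s ∨ ∃ t ∈ T, ∃ e : S, e * e = e ∧ s = t * e := by
    have hs : s ∈ Subsemigroup.closure (F ∪ star '' F ∪ {e : S | e * e = e}) := by
      rw [htop]; trivial
    induction hs using Subsemigroup.closure_induction with
    | mem x hx =>
      rcases hx with hx | hx
      · exact Or.inr ⟨x, hGsub hx, star x * x,
          aux_idem_ss star hinv2 x, (hinv x).symm.trans (mul_assoc _ _ _)⟩
      · exact Or.inl hx
    | mul a b _ _ iha ihb =>
      rcases iha with ha | ⟨t, ht, e, he, rfl⟩
      · rcases ihb with hb | ⟨u, hu, f, hf, rfl⟩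
        · exact Or.inl (aux_idem_mul hcomm a b ha hb)
        · refine Or.inr ⟨u, hu, (star u * a * u) * f,
            aux_idem_mul hcomm _ _ (aux_conj_idem star hinv hinv2 hcomm u a ha) hf, ?_⟩
          calc a * (u * f) = (a * u) * f := (mul_assoc _ _ _).symm
            _ = (u * (star u * a * u)) * f := by
                rw [aux_swap star hinv hcomm u a ha]
            _ = u * ((star u * a * u) * f) := mul_assoc _ _ _
      · rcases ihb with hb | ⟨u, hu, f, hf, rfl⟩
        · exact Or.inr ⟨t, ht, e * b, aux_idem_mul hcomm e b he hb, mul_assoc _ _ _⟩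
        · refine Or.inr ⟨t * u, hTmul t ht u hu, (star u * e * u) * f,
            aux_idem_mul hcomm _ _ (aux_conj_idem star hinv hinv2 hcomm u e he) hf, ?_⟩
          calc t * e * (u * f) = t * ((e * u) * f) := by simp only [mul_assoc]
            _ = t * ((u * (star u * e * u)) * f) := by
                rw [aux_swap star hinv hcomm u e he]
            _ = t * u * (star u * e * u * f) := by simp only [mul_assoc]
  rcases key with h | ⟨t, ht, e, he, rfl⟩
  · exact Or.inl h
  · right
    refine ⟨t, ht, ?_⟩
    have hss : (star t * t) * (star t * t) = star t * t := aux_idem_ss star hinv2 t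
    -- star (t*e) = e * star t
    have hstar : star (t * e) = e * star t := by
      refine aux_unique hcomm (t * e) _ _ (hinv _) (hinv2 _) ?_ ?_
      · calc t * e * (e * star t) * (t * e)
            = t * ((e * e) * (star t * t)) * e := by simp only [mul_assoc]
          _ = t * (e * (star t * t)) * e := by rw [he]
          _ = t * ((star t * t) * e) * e := by rw [hcomm _ _ he hss]
          _ = (t * star t * t) * (e * e) := by simp only [mul_assoc]
          _ = t * e := by rw [hinv, he]
      · calc e * star t * (t * e) * (e * star t)
            = e * (star t * t) * ((e * e) * star t) := by simp only [mul_assoc]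
          _ = e * (star t * t) * (e * star t) := by rw [he]
          _ = ((star t * t) * e) * (e * star t) := by rw [hcomm _ _ hss he]
          _ = (star t * t) * (e * e) * star t := by simp only [mul_assoc]
          _ = ((star t * t) * e) * star t := by rw [he]
          _ = (e * (star t * t)) * star t := by rw [hcomm _ _ hss he]
          _ = e * ((star t * t) * star t) := mul_assoc _ _ _
          _ = e * star t := by rw [hinv2]
    rw [hstar]
    have main : t * (e * star t * (t * e)) = t * e := by
      calc t * (e * star t * (t * e))
          = t * ((e * (star t * t)) * e) := by simp only [mul_assoc]
        _ = t * (((star t * t) * e) * e) := by rw [hcomm _ _ he hss]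
        _ = (t * star t * t) * (e * e) := by simp only [mul_assoc]
        _ = t * e := by rw [hinv, he]
    exact main.symm
end

section
/- Let S be an inverse semigroup with a proper and right subinvariant uniformly discrete extended metric whose components are the L-classes. Then S is quasi-countable: there is a countable subset F of S with S = ⟨F ∪ E⟩, where E is the set of idempotents. -/
open scoped ENNReal

/-- An inverse semigroup admitting a proper and right subinvariant uniformly
discrete extended metric whose components are the L-classes is quasi-countable. -/
theorem stmt_14 {S : Type*} [Semigroup S] (star : S → S)
    (hinv : ∀ s : S, s * star s * s = s)
    (hinv2 : ∀ s : S, star s * s * star s = star s)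
    (hcomm : ∀ e f : S, e * e = e → f * f = f → e * f = f * e)
    (d : S → S → ℝ≥0∞)
    (hrefl : ∀ x y : S, d x y = 0 ↔ x = y)
    (hsymm : ∀ x y : S, d x y = d y x)
    (htri : ∀ x y z : S, d x z ≤ d x y + d y z)
    (hcomp : ∀ x y : S, d x y ≠ ⊤ ↔ star x * x = star y * y)
    (hsub : ∀ s t x : S, d (s * x) (t * x) ≤ d s t)
    (hud : ∃ c : ℝ≥0∞, 0 < c ∧ ∀ x y : S, x ≠ y → c < d x y)
    (hproper : ∀ r : ℝ≥0∞, r ≠ ⊤ →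
      ∃ F : Finset S, ∀ x y : S, x ≠ y → d x y ≤ r → ∃ f ∈ F, y = f * x) :
    ∃ F : Set S, F.Countable ∧
      Subsemigroup.closure (F ∪ star '' F ∪ {e : S | e * e = e}) = ⊤ := by
  -- uniqueness of inverses (needs commuting idempotents)
  have uniq : ∀ a b c : S, a*b*a = a → b*a*b = b → a*c*a = a → c*a*c = c → b = c := by
    intro a b c h1 h2 h3 h4
    have hba : (b*a)*(b*a) = b*a := by
      calc (b*a)*(b*a) = b*(a*b*a) := by simp only [mul_assoc]
        _ = b*a := by rw [h1]
    have hca : (c*a)*(c*a) = c*a := by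
      calc (c*a)*(c*a) = c*(a*c*a) := by simp only [mul_assoc]
        _ = c*a := by rw [h3]
    have hab : (a*b)*(a*b) = a*b := by
      calc (a*b)*(a*b) = a*(b*a*b) := by simp only [mul_assoc]
        _ = a*b := by rw [h2]
    have hac : (a*c)*(a*c) = a*c := by
      calc (a*c)*(a*c) = a*(c*a*c) := by simp only [mul_assoc]
        _ = a*c := by rw [h4]
    have key1 : b = c*(a*b) := by
      calc b = b*a*b := h2.symm
        _ = b*(a*c*a)*b := by rw [h3]
        _ = (b*a)*((c*a)*b) := by simp only [mul_assoc]
        _ = (c*a)*((b*a)*b) := by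
              rw [← mul_assoc, hcomm _ _ hba hca, mul_assoc]
        _ = c*(a*(b*a*b)) := by simp only [mul_assoc]
        _ = c*(a*b) := by rw [h2]
    have key2 : c = c*(a*b) := by
      calc c = c*a*c := h4.symm
        _ = c*(a*b*a)*c := by rw [h1]
        _ = c*((a*b)*((a*c))) := by simp only [mul_assoc]
        _ = c*((a*c)*(a*b)) := by rw [hcomm _ _ hab hac]
        _ = (c*a*c)*(a*b) := by simp only [mul_assoc]
        _ = c*(a*b) := by rw [h4]
    exact key1.trans key2.symm
  have hstar_idem : ∀ e : S, e*e = e → star e * e = e := by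
    intro e he
    have h3 : e*e*e = e := by rw [he, he]
    have h := uniq e (star e) e (hinv e) (hinv2 e) h3 h3
    rw [h, he]
  set F : Set S := ⋃ n : ℕ,
    ((hproper (n : ℝ≥0∞) (ENNReal.natCast_ne_top n)).choose : Set S) with hF
  refine ⟨F, Set.countable_iUnion fun n => Finset.countable_toSet _, ?_⟩
  rw [Subsemigroup.eq_top_iff']
  intro s
  have hee : (star s * s) * (star s * s) = star s * s := by
    calc (star s * s) * (star s * s) = star s * (s * star s * s) := by
          simp only [mul_assoc]
      _ = star s * s := by rw [hinv]
  have heE : star s * s ∈ Subsemigroup.closure (F ∪ star '' F ∪ {e : S | e * e = e}) :=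
    Subsemigroup.subset_closure (Or.inr hee)
  by_cases hse : s = star s * s
  · rw [hse]; exact heE
  · have hfin : d (star s * s) s ≠ ⊤ :=
      (hcomp (star s * s) s).mpr (hstar_idem _ hee)
    obtain ⟨n, hn⟩ := ENNReal.exists_nat_gt hfin
    obtain ⟨f, hfF, hs⟩ :=
      (hproper (n : ℝ≥0∞) (ENNReal.natCast_ne_top n)).choose_spec (star s * s) s
        (fun h => hse h.symm) hn.le
    have hfmem : f ∈ Subsemigroup.closure (F ∪ star '' F ∪ {e : S | e * e = e}) :=
      Subsemigroup.subset_closure (Or.inl (Or.inl (Set.mem_iUnion.mpr ⟨n, hfF⟩)))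
    rw [hs]
    exact Subsemigroup.mul_mem _ hfmem heE
end

section
/- Every inverse semigroup S that is quasi-generated by a countable set admits a proper length function: a function l : S → [0,∞) with l(s)=0 iff s is idempotent, l(s)=l(s*), l(st) ≤ l(s)+l(t), and such that for every r > 0 the set {s ∈ S : 0 < l(s) ≤ r} is finitely upper bounded in the natural partial order (i.e., contained in the downward closure of a finite set). -/
open scoped NNReal

namespace Stmt15Aux

variable {S : Type*} [Semigroup S]

section Basics

variable (star : S → S)

theorem idem_mul (hcomm : ∀ e f : S, e * e = e → f * f = f → e * f = f * e) {e f : S} (he : e * e = e) (hf : f * f = f) :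
    (e * f) * (e * f) = e * f := by
  calc (e * f) * (e * f) = e * (f * e) * f := by simp [mul_assoc]
    _ = e * (e * f) * f := by rw [hcomm f e hf he]
    _ = (e * e) * (f * f) := by simp [mul_assoc]
    _ = e * f := by rw [he, hf]

theorem star_mul_self_idem (hinv : ∀ s : S, s * star s * s = s) (s : S) :
    (star s * s) * (star s * s) = star s * s := by
  calc (star s * s) * (star s * s) = star s * (s * star s * s) := by simp [mul_assoc]
    _ = star s * s := by rw [hinv]

theorem mul_star_self_idem (hinv2 : ∀ s : S, star s * s * star s = star s) (s : S) :
    (s * star s) * (s * star s) = s * star s := by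
  calc (s * star s) * (s * star s) = s * (star s * s * star s) := by simp [mul_assoc]
    _ = s * star s := by rw [hinv2]

/-- Uniqueness of inverses in an inverse semigroup. -/
theorem star_unique (hcomm : ∀ e f : S, e * e = e → f * f = f → e * f = f * e) {s x y : S} (h1 : s * x * s = s) (h2 : x * s * x = x)
    (h3 : s * y * s = s) (h4 : y * s * y = y) : x = y := by
  have e1 : (s * x) * (s * x) = s * x := by
    calc (s * x) * (s * x) = (s * x * s) * x := by simp [mul_assoc]
      _ = s * x := by rw [h1]
  have e2 : (s * y) * (s * y) = s * y := by
    calc (s * y) * (s * y) = (s * y * s) * y := by simp [mul_assoc]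
      _ = s * y := by rw [h3]
  have e3 : (x * s) * (x * s) = x * s := by
    calc (x * s) * (x * s) = (x * s * x) * s := by simp [mul_assoc]
      _ = x * s := by rw [h2]
  have e4 : (y * s) * (y * s) = y * s := by
    calc (y * s) * (y * s) = (y * s * y) * s := by simp [mul_assoc]
      _ = y * s := by rw [h4]
  have hx : x = x * s * y := by
    calc x = x * s * x := h2.symm
      _ = x * (s * y * s) * x := by rw [h3]
      _ = x * ((s * y) * (s * x)) := by simp [mul_assoc]
      _ = x * ((s * x) * (s * y)) := by rw [hcomm _ _ e2 e1]
      _ = (x * s * x) * (s * y) := by simp [mul_assoc]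
      _ = x * (s * y) := by rw [h2]
      _ = x * s * y := by rw [mul_assoc]
  have hy : y = x * s * y := by
    calc y = y * s * y := h4.symm
      _ = y * (s * x * s) * y := by rw [h1]
      _ = ((y * s) * (x * s)) * y := by simp [mul_assoc]
      _ = ((x * s) * (y * s)) * y := by rw [hcomm _ _ e4 e3]
      _ = (x * s) * (y * s * y) := by simp [mul_assoc]
      _ = (x * s) * y := by rw [h4]
  rw [hx, ← hy]

theorem star_idem (hinv : ∀ s : S, s * star s * s = s) (hinv2 : ∀ s : S, star s * s * star s = star s) (hcomm : ∀ e f : S, e * e = e → f * f = f → e * f = f * e) {e : S} (he : e * e = e) : star e = e := by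
  have h3 : e * e * e = e := by rw [he, he]
  exact star_unique hcomm (hinv e) (hinv2 e) h3 h3

theorem star_star (hinv : ∀ s : S, s * star s * s = s) (hinv2 : ∀ s : S, star s * s * star s = star s) (hcomm : ∀ e f : S, e * e = e → f * f = f → e * f = f * e) (s : S) : star (star s) = s :=
  star_unique hcomm (hinv (star s)) (hinv2 (star s)) (hinv2 s) (hinv s)

theorem star_mul (hinv : ∀ s : S, s * star s * s = s) (hinv2 : ∀ s : S, star s * s * star s = star s) (hcomm : ∀ e f : S, e * e = e → f * f = f → e * f = f * e) (s t : S) : star (s * t) = star t * star s := by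
  have i1 : (t * star t) * (t * star t) = t * star t := mul_star_self_idem star hinv2 t
  have i2 : (star s * s) * (star s * s) = star s * s := star_mul_self_idem star hinv s
  have h3 : (s * t) * (star t * star s) * (s * t) = s * t := by
    calc (s * t) * (star t * star s) * (s * t)
        = s * ((t * star t) * (star s * s)) * t := by simp [mul_assoc]
      _ = s * ((star s * s) * (t * star t)) * t := by rw [hcomm _ _ i1 i2]
      _ = (s * star s * s) * (t * star t * t) := by simp [mul_assoc]
      _ = s * t := by rw [hinv, hinv]
  have h4 : (star t * star s) * (s * t) * (star t * star s) = star t * star s := by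
    calc (star t * star s) * (s * t) * (star t * star s)
        = star t * ((star s * s) * (t * star t)) * star s := by simp [mul_assoc]
      _ = star t * ((t * star t) * (star s * s)) * star s := by rw [hcomm _ _ i2 i1]
      _ = (star t * t * star t) * (star s * s * star s) := by simp [mul_assoc]
      _ = star t * star s := by rw [hinv2, hinv2]
  exact star_unique hcomm (hinv (s * t)) (hinv2 (s * t)) h3 h4

/-- Absorbing an idempotent to the right: `e * c = c * (star c * e * c)`. -/
theorem absorb (hinv : ∀ s : S, s * star s * s = s) (hinv2 : ∀ s : S, star s * s * star s = star s) (hcomm : ∀ e f : S, e * e = e → f * f = f → e * f = f * e) {e : S} (he : e * e = e) (c : S) :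
    e * c = c * (star c * e * c) := by
  have i : (c * star c) * (c * star c) = c * star c := mul_star_self_idem star hinv2 c
  calc e * c = e * (c * star c * c) := by rw [hinv]
    _ = (e * (c * star c)) * c := by simp [mul_assoc]
    _ = ((c * star c) * e) * c := by rw [hcomm _ _ he i]
    _ = c * (star c * e * c) := by simp [mul_assoc]

theorem conj_idem (hinv2 : ∀ s : S, star s * s * star s = star s) (hcomm : ∀ e f : S, e * e = e → f * f = f → e * f = f * e) {e : S} (he : e * e = e) (c : S) :
    (star c * e * c) * (star c * e * c) = star c * e * c := by
  have i : (c * star c) * (c * star c) = c * star c := mul_star_self_idem star hinv2 c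
  calc (star c * e * c) * (star c * e * c)
      = star c * (e * ((c * star c) * (e * c))) := by simp [mul_assoc]
    _ = star c * (e * (e * ((c * star c) * c))) := by
        rw [← mul_assoc (c * star c) e c, hcomm _ _ i he, mul_assoc]
    _ = star c * ((e * e) * ((c * star c) * c)) := by simp [mul_assoc]
    _ = star c * (e * ((c * star c) * c)) := by rw [he]
    _ = star c * ((e * (c * star c)) * c) := by simp [mul_assoc]
    _ = star c * (((c * star c) * e) * c) := by rw [hcomm _ _ he i]
    _ = (star c * c * star c) * (e * c) := by simp [mul_assoc]
    _ = star c * (e * c) := by rw [hinv2]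
    _ = star c * e * c := by rw [mul_assoc]

/-- If `s = t * e` with `e` idempotent, then `s = t * (star s * s)`. -/
theorem le_of_eq_mul_idem (hinv : ∀ s : S, s * star s * s = s) (hinv2 : ∀ s : S, star s * s * star s = star s) (hcomm : ∀ e f : S, e * e = e → f * f = f → e * f = f * e) {e s t : S} (he : e * e = e) (h : s = t * e) :
    s = t * (star s * s) := by
  have i : (star t * t) * (star t * t) = star t * t := star_mul_self_idem star hinv t
  have hst : star s = e * star t := by
    rw [h, star_mul star hinv hinv2 hcomm, star_idem star hinv hinv2 hcomm he]
  have : t * (star s * s) = s := by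
    calc t * (star s * s) = t * ((e * star t) * (t * e)) := by rw [hst, h]
      _ = t * ((e * (star t * t)) * e) := by simp [mul_assoc]
      _ = t * (((star t * t) * e) * e) := by rw [hcomm _ _ he i]
      _ = (t * star t * t) * (e * e) := by simp [mul_assoc]
      _ = t * e := by rw [hinv, he]
      _ = s := h.symm
  exact this.symm

end Basics

/-- Weighted word cost over the generating data `f`. -/
inductive Cost (star : S → S) (f : ℕ → S) : S → ℕ → Prop
  | idem (e : S) (he : e * e = e) : Cost star f e 0
  | gen (k : ℕ) : Cost star f (f k) (k + 1)
  | genStar (k : ℕ) : Cost star f (star (f k)) (k + 1)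
  | mul {s t : S} {m n : ℕ} : Cost star f s m → Cost star f t n → Cost star f (s * t) (m + n)

section CostLemmas

variable (star : S → S) (f : ℕ → S)

theorem cost_star (hinv : ∀ s : S, s * star s * s = s) (hinv2 : ∀ s : S, star s * s * star s = star s) (hcomm : ∀ e f : S, e * e = e → f * f = f → e * f = f * e) {s : S} {n : ℕ} (h : Cost star f s n) : Cost star f (star s) n := by
  induction h with
  | idem e he =>
      rw [star_idem star hinv hinv2 hcomm he]
      exact Cost.idem e he
  | gen k => exact Cost.genStar k
  | genStar k =>
      rw [star_star star hinv hinv2 hcomm]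
      exact Cost.gen k
  | mul hs ht ihs iht =>
      rw [star_mul star hinv hinv2 hcomm, Nat.add_comm]
      exact Cost.mul iht ihs

theorem cost_zero (hcomm : ∀ e f : S, e * e = e → f * f = f → e * f = f * e) {s : S} (h : Cost star f s 0) : s * s = s := by
  generalize hn : 0 = n at h
  induction h with
  | idem e he => exact he
  | gen k => omega
  | genStar k => omega
  | mul hs ht ihs iht =>
      rename_i s' t' m' n'
      have hm : (0 : ℕ) = m' := by omega
      have hn' : (0 : ℕ) = n' := by omega
      exact idem_mul hcomm (ihs hm) (iht hn')

end CostLemmas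

/-- Sets of products of at most `n` letters from the alphabet `A`. -/
def W (A : Set S) : ℕ → Set S
  | 0 => ∅
  | n + 1 => A ∪ Set.image2 (· * ·) (W A n) A

theorem W_succ (A : Set S) : ∀ n : ℕ, W A n ⊆ W A (n + 1) := by
  intro n
  induction n with
  | zero => simp [W]
  | succ n ih =>
      intro x hx
      rcases hx with hx | hx
      · exact Or.inl hx
      · exact Or.inr (Set.image2_subset ih subset_rfl hx)

theorem W_mono (A : Set S) {m n : ℕ} (h : m ≤ n) : W A m ⊆ W A n := by
  induction n with
  | zero =>
      have : m = 0 := by omega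
      subst this; exact subset_rfl
  | succ n ih =>
      rcases Nat.lt_succ_iff_lt_or_eq.mp (Nat.lt_succ_of_le h) with h' | h'
      · exact (ih (by omega)).trans (W_succ A n)
      · subst h'; exact subset_rfl

theorem W_mul (A : Set S) : ∀ {n m : ℕ} {b c : S}, b ∈ W A m → c ∈ W A n →
    b * c ∈ W A (m + n) := by
  intro n
  induction n with
  | zero => intro m b c _ hc; exact absurd hc (by simp [W])
  | succ n ih =>
      intro m b c hb hc
      rcases hc with hc | hc
      · have : b * c ∈ W A (m + 1) := Or.inr (Set.mem_image2_of_mem hb hc)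
        exact W_mono A (by omega) this
      · rcases hc with ⟨c', hc', a, ha, rfl⟩
        have : (b * c') * a ∈ W A (m + n + 1) :=
          Or.inr (Set.mem_image2_of_mem (ih hb hc') ha)
        have h2 : b * (c' * a) ∈ W A (m + n + 1) := by rwa [← mul_assoc]
        exact W_mono A (by omega) h2

theorem W_finite {A : Set S} (hA : A.Finite) (n : ℕ) : (W A n).Finite := by
  induction n with
  | zero => simp [W]
  | succ n ih => exact (hA.union (Set.Finite.image2 _ ih hA))

section Key

variable (star : S → S) (f : ℕ → S)

/-- The alphabet of the first `N` generators and their stars. -/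
def alph (N : ℕ) : Set S := (f '' Set.Iio N) ∪ ((star ∘ f) '' Set.Iio N)

theorem key (hinv : ∀ s : S, s * star s * s = s) (hinv2 : ∀ s : S, star s * s * star s = star s) (hcomm : ∀ e f : S, e * e = e → f * f = f → e * f = f * e) {s : S} {n : ℕ} (h : Cost star f s n) (N : ℕ) (hn : n ≤ N) :
    s * s = s ∨ ∃ b ∈ W (alph star f N) n, ∃ e : S, e * e = e ∧ s = b * e := by
  induction h with
  | idem e he => exact Or.inl he
  | gen k =>
      refine Or.inr ⟨f k, ?_, star (f k) * f k, star_mul_self_idem star hinv (f k), ?_⟩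
      · have h1 : f k ∈ alph star f N := Or.inl ⟨k, Set.mem_Iio.mpr (by omega), rfl⟩
        have h2 : f k ∈ W (alph star f N) 1 := Or.inl h1
        exact W_mono _ (by omega) h2
      · rw [← mul_assoc, hinv]
  | genStar k =>
      refine Or.inr ⟨star (f k), ?_, f k * star (f k), mul_star_self_idem star hinv2 (f k), ?_⟩
      · have h1 : star (f k) ∈ alph star f N := Or.inr ⟨k, Set.mem_Iio.mpr (by omega), rfl⟩
        have h2 : star (f k) ∈ W (alph star f N) 1 := Or.inl h1
        exact W_mono _ (by omega) h2
      · rw [← mul_assoc, hinv2]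
  | mul hs ht ihs iht =>
      rename_i x y m' n'
      have hmN : m' ≤ N := by omega
      have hnN : n' ≤ N := by omega
      rcases ihs (by omega) with hxi | ⟨b, hb, e, he, hx⟩
      · rcases iht (by omega) with hyi | ⟨c, hc, e', he', hy⟩
        · exact Or.inl (idem_mul hcomm hxi hyi)
        · -- x idempotent, y = c * e'
          refine Or.inr ⟨c, W_mono _ (by omega) hc, (star c * x * c) * e',
            idem_mul hcomm (conj_idem star hinv2 hcomm hxi c) he', ?_⟩
          calc x * y = x * c * e' := by rw [hy, mul_assoc]
            _ = (c * (star c * x * c)) * e' := by rw [absorb star hinv hinv2 hcomm hxi c]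
            _ = c * ((star c * x * c) * e') := by rw [mul_assoc]
      · rcases iht (by omega) with hyi | ⟨c, hc, e', he', hy⟩
        · -- x = b * e, y idempotent
          refine Or.inr ⟨b, W_mono _ (by omega) hb, e * y, idem_mul hcomm he hyi, ?_⟩
          rw [hx, mul_assoc]
        · -- x = b * e, y = c * e'
          refine Or.inr ⟨b * c, W_mul _ hb hc, (star c * e * c) * e',
            idem_mul hcomm (conj_idem star hinv2 hcomm he c) he', ?_⟩
          calc x * y = (b * (e * c)) * e' := by rw [hx, hy]; simp [mul_assoc]
            _ = (b * (c * (star c * e * c))) * e' := by rw [absorb star hinv hinv2 hcomm he c]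
            _ = (b * c) * ((star c * e * c) * e') := by simp [mul_assoc]

end Key

end Stmt15Aux

open Stmt15Aux

/-- Every quasi-countable inverse semigroup admits a proper length function. -/
theorem stmt_15 {S : Type*} [Semigroup S] (star : S → S)
    (hinv : ∀ s : S, s * star s * s = s)
    (hinv2 : ∀ s : S, star s * s * star s = star s)
    (hcomm : ∀ e f : S, e * e = e → f * f = f → e * f = f * e)
    (hqc : ∃ F : Set S, F.Countable ∧
      Subsemigroup.closure (F ∪ star '' F ∪ {e : S | e * e = e}) = ⊤) :
    ∃ l : S → ℝ≥0,
      (∀ s : S, l s = 0 ↔ s * s = s) ∧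
      (∀ s : S, l (star s) = l s) ∧
      (∀ s t : S, l (s * t) ≤ l s + l t) ∧
      (∀ r : ℝ≥0, 0 < r → ∃ G : Finset S, ∀ s : S, 0 < l s → l s ≤ r →
        ∃ b ∈ G, s = b * (star s * s)) := by
  classical
  rcases isEmpty_or_nonempty S with hS | hS
  · refine ⟨fun _ => 0, fun s => isEmptyElim s, fun s => isEmptyElim s,
      fun s => isEmptyElim s, fun r _ => ⟨∅, fun s => isEmptyElim s⟩⟩
  · obtain ⟨F, hFc, hFgen⟩ := hqc
    -- get an enumeration f : ℕ → S with F ⊆ range f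
    obtain ⟨f, hf⟩ : ∃ f : ℕ → S, F ⊆ Set.range f := by
      rcases F.eq_empty_or_nonempty with rfl | hne
      · exact ⟨fun _ => Classical.arbitrary S, by simp⟩
      · obtain ⟨f, hf⟩ := hFc.exists_eq_range hne
        exact ⟨f, hf.le⟩
    -- every element has a finite cost
    have hex : ∀ s : S, ∃ n : ℕ, Cost star f s n := by
      intro s
      have hs : s ∈ Subsemigroup.closure (F ∪ star '' F ∪ {e : S | e * e = e}) := by
        rw [hFgen]; trivial
      induction hs using Subsemigroup.closure_induction with
      | mem x hx =>
          rcases hx with (hx | hx) | hx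
          · obtain ⟨k, rfl⟩ := hf hx
            exact ⟨k + 1, Cost.gen k⟩
          · obtain ⟨y, hy, rfl⟩ := hx
            obtain ⟨k, rfl⟩ := hf hy
            exact ⟨k + 1, Cost.genStar k⟩
          · exact ⟨0, Cost.idem x hx⟩
      | mul x y _ _ ihx ihy =>
          obtain ⟨m, hm⟩ := ihx
          obtain ⟨n, hn⟩ := ihy
          exact ⟨m + n, Cost.mul hm hn⟩
    set c : S → ℕ := fun s => sInf {n | Cost star f s n} with hc
    have hcmem : ∀ s : S, Cost star f s (c s) := fun s => Nat.sInf_mem (hex s)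
    have hcle : ∀ {s : S} {n : ℕ}, Cost star f s n → c s ≤ n := fun h => Nat.sInf_le h
    refine ⟨fun s => (c s : ℝ≥0), ?_, ?_, ?_, ?_⟩
    · intro s
      rw [Nat.cast_eq_zero]
      constructor
      · intro h
        have h0 : (0 : ℕ) ∈ {n | Cost star f s n} := by
          rcases (Nat.sInf_eq_zero.mp h) with h' | h'
          · exact h'
          · exact absurd h' (Set.nonempty_iff_ne_empty.mp (hex s))
        exact cost_zero star f hcomm h0
      · intro h
        exact Nat.le_zero.mp (hcle (Cost.idem s h))
    · intro s
      have h1 : c (star s) ≤ c s := hcle (cost_star star f hinv hinv2 hcomm (hcmem s))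
      have h2 : c s ≤ c (star s) := by
        have := cost_star star f hinv hinv2 hcomm (hcmem (star s))
        rw [star_star star hinv hinv2 hcomm] at this
        exact hcle this
      show ((c (star s) : ℝ≥0)) = ((c s : ℝ≥0))
      exact_mod_cast le_antisymm h1 h2
    · intro s t
      have h : c (s * t) ≤ c s + c t := hcle (Cost.mul (hcmem s) (hcmem t))
      show ((c (s * t) : ℝ≥0)) ≤ ((c s : ℝ≥0)) + ((c t : ℝ≥0))
      exact_mod_cast h
    · intro r _
      set N : ℕ := ⌈(r : ℝ≥0)⌉₊ with hN
      have hAfin : (alph star f N : Set S).Finite :=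
        ((Set.finite_Iio N).image f).union ((Set.finite_Iio N).image (star ∘ f))
      refine ⟨(W_finite hAfin N).toFinset, ?_⟩
      intro s hpos hle
      have hpos' : (0 : ℝ≥0) < (c s : ℝ≥0) := hpos
      have hle' : ((c s : ℝ≥0)) ≤ r := hle
      have hnz : c s ≠ 0 := by
        intro h0
        rw [h0] at hpos'
        simp at hpos'
      have hcN : c s ≤ N := by
        calc c s = ⌈(c s : ℝ≥0)⌉₊ := by simp
          _ ≤ N := Nat.ceil_mono hle'
      rcases key star f hinv hinv2 hcomm (hcmem s) N hcN with hidem | ⟨b, hb, e, he, hse⟩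
      · exact absurd (Nat.le_zero.mp (hcle (Cost.idem s hidem))) hnz
      · refine ⟨b, ?_, ?_⟩
        · rw [Set.Finite.mem_toFinset]
          exact W_mono _ hcN hb
        · exact le_of_eq_mul_idem star hinv hinv2 hcomm he hse
end

section
/- Let S be an inverse monoid with a proper right subinvariant extended metric d whose components are the L-classes. Suppose every finitely generated inverse submonoid of S is finite. Then for every r > 0, the r-components of (S,d) have uniformly bounded cardinality; in particular (S,d) has asymptotic dimension 0. -/
open scoped ENNReal

/-- If every finitely generated inverse submonoid of `S` is finite, then the
`r`-components of `(S,d)` have uniformly bounded cardinality and uniformly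
bounded diameter (asymptotic dimension 0). -/
theorem stmt_18 {S : Type*} [Monoid S] (star : S → S)
    (hinv : ∀ s : S, s * star s * s = s)
    (hinv2 : ∀ s : S, star s * s * star s = star s)
    (hcomm : ∀ e f : S, e * e = e → f * f = f → e * f = f * e)
    (d : S → S → ℝ≥0∞)
    (hrefl : ∀ x y : S, d x y = 0 ↔ x = y)
    (hsymm : ∀ x y : S, d x y = d y x)
    (htri : ∀ x y z : S, d x z ≤ d x y + d y z)
    (hcomp : ∀ x y : S, d x y ≠ ⊤ ↔ star x * x = star y * y)
    (hsub : ∀ s t x : S, d (s * x) (t * x) ≤ d s t)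
    (hproper : ∀ r : ℝ≥0∞, r ≠ ⊤ →
      ∃ F : Finset S, ∀ x y : S, x ≠ y → d x y ≤ r → ∃ f ∈ F, y = f * x)
    (hlf : ∀ F : Finset S,
      ((Submonoid.closure ((F : Set S) ∪ star '' (F : Set S)) : Submonoid S) : Set S).Finite) :
    ∀ r : ℝ≥0∞, 0 < r → r ≠ ⊤ →
      (∃ N : ℕ, ∀ s : S,
        {t : S | Relation.ReflTransGen (fun a b : S => d a b ≤ r) s t}.Finite ∧
        Nat.card {t : S | Relation.ReflTransGen (fun a b : S => d a b ≤ r) s t} ≤ N) ∧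
      (∃ D : ℝ≥0∞, D ≠ ⊤ ∧ ∀ x y : S,
        Relation.ReflTransGen (fun a b : S => d a b ≤ r) x y → d x y ≤ D) := by
  intro r hr hrT
  obtain ⟨F, hF⟩ := hproper r hrT
  set M : Submonoid S := Submonoid.closure ((F : Set S) ∪ star '' (F : Set S)) with hMdef
  have hMfin : ((M : Submonoid S) : Set S).Finite := hlf F
  set N : ℕ := ((M : Submonoid S) : Set S).ncard with hNdef
  set R : S → S → Prop := fun a b : S => d a b ≤ r with hRdef
  -- every element reachable from `s` has the form `m * s` with `m ∈ M`
  have key : ∀ s t : S, Relation.ReflTransGen R s t → ∃ m ∈ M, t = m * s := by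
    intro s t h
    induction h with
    | refl => exact ⟨1, one_mem M, (one_mul s).symm⟩
    | tail hab hbc ih =>
      rename_i b c
      obtain ⟨m, hm, rfl⟩ := ih
      by_cases hbc' : m * s = c
      · exact ⟨m, hm, hbc'.symm⟩
      · obtain ⟨f, hf, hc⟩ := hF (m * s) c hbc' hbc
        refine ⟨f * m, M.mul_mem ?_ hm, by rw [hc, mul_assoc]⟩
        exact Submonoid.subset_closure (Or.inl hf)
  -- the component of `s` is finite of cardinality at most `N`
  have hsub' : ∀ s : S, {t : S | Relation.ReflTransGen R s t} ⊆ (· * s) '' M := by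
    intro s t ht
    obtain ⟨m, hm, rfl⟩ := key s t ht
    exact ⟨m, hm, rfl⟩
  have hfin : ∀ s : S, {t : S | Relation.ReflTransGen R s t}.Finite := fun s =>
    ((hMfin.image _).subset (hsub' s))
  have hcard : ∀ s : S, Nat.card {t : S | Relation.ReflTransGen R s t} ≤ N := by
    intro s
    rw [Nat.card_coe_set_eq]
    calc {t : S | Relation.ReflTransGen R s t}.ncard
        ≤ ((· * s) '' M).ncard := Set.ncard_le_ncard (hsub' s) (hMfin.image _)
      _ ≤ ((M : Submonoid S) : Set S).ncard := Set.ncard_image_le hMfin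
  refine ⟨⟨N, fun s => ⟨hfin s, hcard s⟩⟩, ⟨N * r, ?_, ?_⟩⟩
  · exact ENNReal.mul_ne_top (ENNReal.natCast_ne_top N) hrT
  -- diameter bound via path shortening in the graph of `r`-steps
  classical
  intro x y hxy
  let G : SimpleGraph S :=
    { Adj := fun a b => a ≠ b ∧ d a b ≤ r
      symm := ⟨fun a b hab => ⟨hab.1.symm, (hsymm b a) ▸ hab.2⟩⟩
      loopless := ⟨fun a ha => ha.1 rfl⟩ }
  have hGR : ∀ a b : S, Relation.ReflTransGen G.Adj a b → Relation.ReflTransGen R a b :=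
    fun a b h => Relation.ReflTransGen.mono (fun u v huv => huv.2) a b h
  have hRG : Relation.ReflTransGen G.Adj x y := by
    induction hxy with
    | refl => exact .refl
    | tail hab hbc ih =>
      rename_i b c
      by_cases hbc' : b = c
      · exact hbc' ▸ ih
      · exact ih.tail ⟨hbc', hbc⟩
  obtain ⟨w⟩ := (SimpleGraph.reachable_iff_reflTransGen x y).mpr hRG
  set p : G.Walk x y := w.bypass with hpdef
  have hp : p.IsPath := w.bypass_isPath
  -- distance along a walk
  have hwalk : ∀ (u v : S) (q : G.Walk u v), d u v ≤ (q.length : ℝ≥0∞) * r := by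
    intro u v q
    induction q with
    | nil => simp [(hrefl _ _).mpr rfl]
    | cons h q ih =>
      rename_i a b c
      calc d a c ≤ d a b + d b c := htri a b c
        _ ≤ r + (q.length : ℝ≥0∞) * r := add_le_add h.2 ih
        _ = ((q.length + 1 : ℕ) : ℝ≥0∞) * r := by push_cast; ring
        _ = ((SimpleGraph.Walk.cons h q).length : ℝ≥0∞) * r := by
            rw [SimpleGraph.Walk.length_cons]
  -- the path has length at most `N`
  have hsupp : ∀ u ∈ p.support, u ∈ {t : S | Relation.ReflTransGen R x t} := by
    intro u hu
    exact hGR x u ((SimpleGraph.reachable_iff_reflTransGen x u).mp ⟨p.takeUntil u hu⟩)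
  have hlen : p.length + 1 ≤ N := by
    have h1 : p.support.toFinset.card = p.length + 1 := by
      rw [List.toFinset_card_of_nodup hp.support_nodup, SimpleGraph.Walk.length_support]
    have h2 : p.support.toFinset ⊆ (hfin x).toFinset := by
      intro u hu
      rw [Set.Finite.mem_toFinset]
      exact hsupp u (List.mem_toFinset.mp hu)
    have h3 := Finset.card_le_card h2
    rw [h1] at h3
    refine h3.trans ?_
    rw [← Set.ncard_eq_toFinset_card _ (hfin x)]
    calc {t : S | Relation.ReflTransGen R x t}.ncard
        ≤ ((· * x) '' M).ncard := Set.ncard_le_ncard (hsub' x) (hMfin.image _)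
      _ ≤ N := Set.ncard_image_le hMfin
  calc d x y ≤ (p.length : ℝ≥0∞) * r := hwalk x y p
    _ ≤ (N : ℝ≥0∞) * r :=
        mul_le_mul_left (Nat.cast_le.mpr (Nat.le_of_succ_le hlen)) r
end

section
/- Let S be an inverse monoid with a proper right subinvariant extended metric d whose components are the L-classes. Suppose every finitely generated inverse submonoid of S has only finite L-classes. Then for every r > 0 and every s ∈ S, the r-component of s in (S,d) is finite; i.e., (S,d) is sparse. -/
open scoped ENNReal

/-- If every finitely generated inverse submonoid of `S` has only finite
L-classes, then every `r`-component of `(S,d)` is finite, i.e. `(S,d)` is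
sparse. -/
theorem stmt_19 {S : Type*} [Monoid S] (star : S → S)
    (hinv : ∀ s : S, s * star s * s = s)
    (hinv2 : ∀ s : S, star s * s * star s = star s)
    (hcomm : ∀ e f : S, e * e = e → f * f = f → e * f = f * e)
    (d : S → S → ℝ≥0∞)
    (hrefl : ∀ x y : S, d x y = 0 ↔ x = y)
    (hsymm : ∀ x y : S, d x y = d y x)
    (htri : ∀ x y z : S, d x z ≤ d x y + d y z)
    (hcomp : ∀ x y : S, d x y ≠ ⊤ ↔ star x * x = star y * y)
    (hsub : ∀ s t x : S, d (s * x) (t * x) ≤ d s t)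
    (hproper : ∀ r : ℝ≥0∞, r ≠ ⊤ →
      ∃ F : Finset S, ∀ x y : S, x ≠ y → d x y ≤ r → ∃ f ∈ F, y = f * x)
    (hlf : ∀ F : Finset S, ∀ t ∈ Submonoid.closure ((F : Set S) ∪ star '' (F : Set S)),
      {x : S | x ∈ Submonoid.closure ((F : Set S) ∪ star '' (F : Set S)) ∧
        star x * x = star t * t}.Finite) :
    ∀ r : ℝ≥0∞, 0 < r → r ≠ ⊤ → ∀ s : S,
      {t : S | Relation.ReflTransGen (fun a b : S => d a b ≤ r) s t}.Finite := by
  classical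
  intro r hr hr' s
  obtain ⟨F, hF⟩ := hproper r hr'
  set F' : Finset S := insert s F with hF'
  have hsmem : s ∈ Submonoid.closure ((F' : Set S) ∪ star '' (F' : Set S)) :=
    Submonoid.subset_closure (Or.inl (by simp [hF']))
  refine Set.Finite.subset (hlf F' s hsmem) ?_
  intro t ht
  simp only [Set.mem_setOf_eq] at ht ⊢
  induction ht with
  | refl => exact ⟨hsmem, rfl⟩
  | tail _hab hbc ih =>
    rename_i b c
    obtain ⟨hbM, hbL⟩ := ih
    by_cases hbc' : b = c
    · exact hbc' ▸ ⟨hbM, hbL⟩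
    · obtain ⟨f, hfF, hc⟩ := hF b c hbc' hbc
      have hfM : f ∈ Submonoid.closure ((F' : Set S) ∪ star '' (F' : Set S)) :=
        Submonoid.subset_closure (Or.inl (by simp [hF', hfF]))
      have hcM : c ∈ Submonoid.closure ((F' : Set S) ∪ star '' (F' : Set S)) :=
        hc ▸ Submonoid.mul_mem _ hfM hbM
      have hne : d b c ≠ ⊤ := fun h => hr' (top_le_iff.mp (h ▸ hbc))
      have := (hcomp b c).mp hne
      exact ⟨hcM, this ▸ hbL⟩
end
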